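/- Let (A, m) be a Noetherian local ring, let I ⊆ m be an ideal, let M be a finitely generated A-module, and let L ⊆ K be submodules of M such that the length λ(K/L) is finite. Then there exists N such that for all n ≥ N one has K ∩ IⁿM = L ∩ IⁿM. (Key step in the proof of Dade's Lemma.) -/

import Mathlib

/-- The length of a module, i.e. the Krull dimension of its submodule lattice,
as an element of `ℕ∞`. -/
noncomputable def moduleLength (A M : Type*) [CommRing A] [AddCommGroup M] [Module A M] : ℕ∞ :=
  (Order.krullDim (Submodule A M)).unbotD 0

/-- `lenQuot L K` is the length `λ(K/L)` of the subquotient `K/L` of `M`,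
realized as the image of `K` in `M ⧸ L`. -/
noncomputable def lenQuot {A M : Type*} [CommRing A] [AddCommGroup M] [Module A M]
    (L K : Submodule A M) : ℕ∞ :=
  moduleLength A ↥(K.map L.mkQ)

open IsLocalRing

/-- In a module whose submodule lattice has finite Krull dimension, the chain `Jⁿ • ⊤`
must stabilize at one step. -/
lemma exists_pow_smul_eq_pow_succ_smul {A M : Type*} [CommRing A]
    [AddCommGroup M] [Module A M] (J : Ideal A)
    (hfin : moduleLength A M < ⊤) :
    ∃ c : ℕ, J ^ (c + 1) • (⊤ : Submodule A M) = J ^ c • (⊤ : Submodule A M) := by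
  by_contra hcon
  push_neg at hcon
  have hstep : ∀ n : ℕ, J ^ (n + 1) • (⊤ : Submodule A M) < J ^ n • (⊤ : Submodule A M) := by
    intro n
    refine lt_of_le_of_ne ?_ (hcon n)
    rw [pow_succ, mul_comm, mul_smul]
    exact Submodule.smul_le_right
  unfold moduleLength at hfin
  lift (Order.krullDim (Submodule A M)).unbotD 0 to ℕ using hfin.ne with d hd
  let p : LTSeries (Submodule A M) :=
    ⟨d + 1, fun i => J ^ (d + 1 - (i : ℕ)) • ⊤, by
      intro i
      have hi : (i : ℕ) ≤ d := Nat.lt_succ_iff.mp i.2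
      have h1 : d + 1 - (i : ℕ) = (d - (i : ℕ)) + 1 := by omega
      have h2 : d + 1 - ((i : ℕ) + 1) = d - (i : ℕ) := by omega
      show J ^ (d + 1 - (i.castSucc : ℕ)) • (⊤ : Submodule A M) < J ^ (d + 1 - (i.succ : ℕ)) • (⊤ : Submodule A M)
      simp only [Fin.coe_castSucc, Fin.val_succ, h1, h2]
      exact hstep _⟩
  have hle := Order.LTSeries.length_le_krullDim p
  have hplen : p.length = d + 1 := rfl
  rw [hplen] at hle
  rcases hk : Order.krullDim (Submodule A M) with _ | x
  · rw [hk] at hle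
    exact WithBot.not_coe_le_bot _ hle
  · rw [hk] at hle hd
    rw [show (Order.krullDim (Submodule A M) = some x) = (Order.krullDim (Submodule A M) = (x : WithBot ℕ∞)) from rfl] at hk
    rw [show (some x : WithBot ℕ∞) = (x : WithBot ℕ∞) from rfl, WithBot.unbotD_coe] at hd
    rw [← hd, show (some ((d : ℕ) : ℕ∞) : WithBot ℕ∞) = (((d : ℕ) : ℕ∞) : WithBot ℕ∞) from rfl] at hle
    have h2 : (d + 1 : ℕ) ≤ d := by exact_mod_cast hle
    omega

/-- Key step in the proof of Dade's Lemma: if `L ≤ K` are submodules of a finitely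
generated module `M` over a Noetherian local ring with `λ(K/L)` finite and `I ≤ 𝔪`,
then `K ∩ IⁿM = L ∩ IⁿM` for all large `n`. -/
theorem stmt_1 {A M : Type*} [CommRing A] [IsLocalRing A] [IsNoetherianRing A]
    [AddCommGroup M] [Module A M] [Module.Finite A M]
    (I : Ideal A) (hI : I ≤ IsLocalRing.maximalIdeal A)
    (L K : Submodule A M) (hLK : L ≤ K) (hfin : lenQuot L K < ⊤) :
    ∃ N : ℕ, ∀ n ≥ N,
      K ⊓ I ^ n • (⊤ : Submodule A M) = L ⊓ I ^ n • (⊤ : Submodule A M) := by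

  have hNoeth : IsNoetherian A M := isNoetherian_of_isNoetherianRing_of_finite A M
  set 𝔪 := IsLocalRing.maximalIdeal A with h𝔪
  set Q : Submodule A (M ⧸ L) := K.map L.mkQ with hQ
  -- Step 1: find c with 𝔪^c • K ≤ L, using finiteness of length and Nakayama
  obtain ⟨c, hc⟩ := exists_pow_smul_eq_pow_succ_smul (M := ↥Q) 𝔪 hfin
  have hbot : 𝔪 ^ c • (⊤ : Submodule A ↥Q) = ⊥ := by
    have hfg : (𝔪 ^ c • (⊤ : Submodule A ↥Q)).FG := IsNoetherian.noetherian _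
    have hmul : 𝔪 ^ (c + 1) • (⊤ : Submodule A ↥Q) = 𝔪 • 𝔪 ^ c • ⊤ := by
      rw [pow_succ, mul_comm, mul_smul]
    refine Submodule.eq_bot_of_eq_ideal_smul_of_le_jacobson_annihilator (I := 𝔪) hfg ?_ ?_
    · rw [← hmul, hc]
    · exact le_trans (IsLocalRing.maximalIdeal_le_jacobson _)
        (Ideal.jacobson_mono bot_le)
  have hQbot : 𝔪 ^ c • Q = ⊥ := by
    have := congrArg (Submodule.map Q.subtype) hbot
    rwa [Submodule.map_smul'', Submodule.map_top, Submodule.range_subtype,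
      Submodule.map_bot] at this
  have hKL : 𝔪 ^ c • K ≤ L := by
    have hmap : Submodule.map L.mkQ (𝔪 ^ c • K) = ⊥ := by
      rw [Submodule.map_smul'', ← hQ, hQbot]
    intro x hx
    have hx0 : L.mkQ x = 0 := by
      have : L.mkQ x ∈ Submodule.map L.mkQ (𝔪 ^ c • K) := ⟨x, hx, rfl⟩
      simpa [hmap] using this
    rwa [← Submodule.Quotient.mk_eq_zero L]
  -- Step 2: reduce to a free module in the same universe as A, and apply Artin-Rees
  obtain ⟨t, π, hπ⟩ := Module.Finite.exists_fin' A M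
  set K' : Submodule A (Fin t → A) := K.comap π with hK'
  set L' : Submodule A (Fin t → A) := L.comap π with hL'
  have hK'K : K'.map π = K := Submodule.map_comap_eq_of_surjective hπ K
  have hK'L : 𝔪 ^ c • K' ≤ L' := by
    rw [hL', ← Submodule.map_le_iff_le_comap, Submodule.map_smul'', hK'K]
    exact hKL
  obtain ⟨k, hk⟩ := Ideal.exists_pow_inf_eq_pow_smul I K'
  refine ⟨k + c, fun n hn => ?_⟩
  have hsub : K ⊓ I ^ n • (⊤ : Submodule A M) ≤ L := by
    intro x hx
    -- lift x along π
    have hxI : x ∈ I ^ n • (⊤ : Submodule A M) := hx.2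
    have htop : I ^ n • (⊤ : Submodule A M) = (I ^ n • (⊤ : Submodule A (Fin t → A))).map π := by
      rw [Submodule.map_smul'', Submodule.map_top, LinearMap.range_eq_top.mpr hπ]
    rw [htop] at hxI
    obtain ⟨v, hv, rfl⟩ := hxI
    have hvK' : v ∈ K' := hx.1
    have hvmem : v ∈ I ^ n • (⊤ : Submodule A (Fin t → A)) ⊓ K' := ⟨hv, hvK'⟩
    rw [hk n (le_trans (Nat.le_add_right k c) hn)] at hvmem
    have hvL' : v ∈ L' :=
      hK'L <| Submodule.smul_mono
        (le_trans (Ideal.pow_le_pow_right (by omega)) (Ideal.pow_right_mono hI c))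
        inf_le_right hvmem
    exact hvL'
  exact le_antisymm (le_inf hsub inf_le_right) (inf_le_inf_right _ hLK)
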